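/- Let Γ be a finite nonempty set and let ρ be a probability distribution on Γ with 0 < ρ(w) < 1 for every w ∈ Γ. Let (X_x)_{x ∈ ℕ} be an i.i.d. sequence with common distribution ρ, and for N ≥ 1 and u,v ∈ Γ set e_N(u,v) := card{x ∈ {0,1,…,N−1} : X_x = u and X_{x+1} = v}. Then there exist constants C < ∞, c > 0 and ε₀ > 0 (depending only on Γ and ρ) such that for every ε ∈ (0, ε₀), every N ≥ 1 and every pair u ≠ v in Γ, P(e_N(u,v) − N·ρ(u)·ρ(v) ∉ (−εN, εN)) ≤ C·exp(−c·N·ε²). -/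

import Mathlib

open MeasureTheory ProbabilityTheory Real

section Aux

lemma pcExpAux {t : ℝ} (ht : |t| ≤ 1) : Real.exp t - 1 - t ≤ t ^ 2 := by
  have h := Real.exp_bound ht (n := 2) (by norm_num)
  have h2 : ∑ m ∈ Finset.range 2, t ^ m / m.factorial = 1 + t := by
    simp [Finset.sum_range_succ]
  rw [h2] at h
  have habs : Real.exp t - (1 + t) ≤ |t| ^ 2 * (3 / 4) := by
    have := abs_le.mp h
    have h3 : ((2 : ℕ).succ : ℝ) / ((2 : ℕ).factorial * 2) = 3 / 4 := by norm_num
    nlinarith [this.2]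
  have : |t| ^ 2 = t ^ 2 := sq_abs t
  nlinarith [sq_nonneg t]

variable {Γ : Type*} [DecidableEq Γ]
    [MeasurableSpace Γ] [MeasurableSingletonClass Γ]
    {Ω : Type*} [MeasureSpace Ω]

/-- Centered pair indicator. -/
noncomputable def pcZ (X : ℕ → Ω → Γ) (u v : Γ) (p : ℝ) (x : ℕ) (ω : Ω) : ℝ :=
  (if X x ω = u ∧ X (x + 1) ω = v then (1 : ℝ) else 0) - p

lemma pcZ_meas {X : ℕ → Ω → Γ} (hmeas : ∀ x, Measurable (X x)) (u v : Γ) (p : ℝ) (x : ℕ) :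
    Measurable (pcZ X u v p x) := by
  unfold pcZ
  refine Measurable.sub ?_ measurable_const
  exact Measurable.ite (((hmeas x) (measurableSet_singleton u)).inter
    ((hmeas (x + 1)) (measurableSet_singleton v))) measurable_const measurable_const

lemma pcZ_abs_le {X : ℕ → Ω → Γ} (u v : Γ) {p : ℝ} (hp0 : 0 ≤ p) (hp1 : p ≤ 1) (x : ℕ) (ω : Ω) :
    |pcZ X u v p x ω| ≤ 1 := by
  unfold pcZ
  split <;> rw [abs_le] <;> constructor <;> linarith

lemma pcZ_int [IsProbabilityMeasure (ℙ : Measure Ω)] {X : ℕ → Ω → Γ}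
    (hmeas : ∀ x, Measurable (X x)) (u v : Γ) {p : ℝ} (hp0 : 0 ≤ p) (hp1 : p ≤ 1)
    (s : Finset ℕ) (t : ℝ) :
    Integrable (fun ω => Real.exp (t * ∑ x ∈ s, pcZ X u v p x ω)) ℙ := by
  have hZmeas : Measurable fun ω => Real.exp (t * ∑ x ∈ s, pcZ X u v p x ω) := by
    apply Measurable.exp
    exact (Finset.measurable_sum s (fun x _ => pcZ_meas hmeas u v p x)).const_mul t
  refine (integrable_const (Real.exp (|t| * s.card))).mono' hZmeas.aestronglyMeasurable
    (Filter.Eventually.of_forall fun ω => ?_)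
  rw [Real.norm_eq_abs, abs_exp]
  apply Real.exp_le_exp.mpr
  calc t * ∑ x ∈ s, pcZ X u v p x ω ≤ |t * ∑ x ∈ s, pcZ X u v p x ω| := le_abs_self _
    _ = |t| * |∑ x ∈ s, pcZ X u v p x ω| := abs_mul _ _
    _ ≤ |t| * s.card := by
        apply mul_le_mul_of_nonneg_left _ (abs_nonneg t)
        calc |∑ x ∈ s, pcZ X u v p x ω| ≤ ∑ x ∈ s, |pcZ X u v p x ω| :=
              Finset.abs_sum_le_sum_abs _ _
          _ ≤ ∑ x ∈ s, (1 : ℝ) := Finset.sum_le_sum fun x _ => pcZ_abs_le u v hp0 hp1 x ω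
          _ = s.card := by simp

lemma pcZ_indep_sum {X : ℕ → Ω → Γ} (hmeas : ∀ x, Measurable (X x))
    (hindep : iIndepFun X) (u v : Γ) (p : ℝ)
    {a : ℕ} {s : Finset ℕ} {r : ℕ} (ha : a % 2 = r) (hs : ∀ x ∈ s, x % 2 = r) (has : a ∉ s) :
    IndepFun (pcZ X u v p a) (fun ω => ∑ x ∈ s, pcZ X u v p x ω) ℙ := by
  classical
  set A : Finset ℕ := {a, a + 1} with hA
  set B : Finset ℕ := s.biUnion (fun x => {x, x + 1}) with hB
  have hAB : Disjoint A B := by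
    rw [Finset.disjoint_left]
    intro y hyA hyB
    rw [hB, Finset.mem_biUnion] at hyB
    obtain ⟨x, hxs, hyx⟩ := hyB
    have hx := hs x hxs
    have hax : a ≠ x := fun h => has (h ▸ hxs)
    rw [hA] at hyA
    simp only [Finset.mem_insert, Finset.mem_singleton] at hyA hyx
    omega
  have hamem : a ∈ A := by simp [hA]
  have ha1mem : a + 1 ∈ A := by simp [hA]
  have hmem1 : ∀ x ∈ s, x ∈ B := fun x hx => Finset.mem_biUnion.mpr ⟨x, hx, by simp⟩
  have hmem2 : ∀ x ∈ s, x + 1 ∈ B := fun x hx => Finset.mem_biUnion.mpr ⟨x, hx, by simp⟩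
  set g : (A → Γ) → ℝ := fun f =>
    (if f ⟨a, hamem⟩ = u ∧ f ⟨a + 1, ha1mem⟩ = v then (1 : ℝ) else 0) - p with hg
  set h : (B → Γ) → ℝ := fun f =>
    ∑ x ∈ s.attach, ((if f ⟨x.1, hmem1 x.1 x.2⟩ = u ∧ f ⟨x.1 + 1, hmem2 x.1 x.2⟩ = v
      then (1 : ℝ) else 0) - p) with hh
  have hgmeas : Measurable g := by
    refine Measurable.sub ?_ measurable_const
    refine Measurable.ite ?_ measurable_const measurable_const
    have m1 : MeasurableSet ((fun f : {y // y ∈ A} → Γ => f ⟨a, hamem⟩) ⁻¹' {u}) :=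
      (measurable_pi_apply _) (measurableSet_singleton u)
    have m2 : MeasurableSet ((fun f : {y // y ∈ A} → Γ => f ⟨a + 1, ha1mem⟩) ⁻¹' {v}) :=
      (measurable_pi_apply _) (measurableSet_singleton v)
    exact m1.inter m2
  have hhmeas : Measurable h := by
    apply Finset.measurable_sum
    intro x _
    refine Measurable.sub ?_ measurable_const
    refine Measurable.ite ?_ measurable_const measurable_const
    have m1 : MeasurableSet ((fun f : {y // y ∈ B} → Γ => f ⟨x.1, hmem1 x.1 x.2⟩) ⁻¹' {u}) :=
      (measurable_pi_apply _) (measurableSet_singleton u)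
    have m2 : MeasurableSet ((fun f : {y // y ∈ B} → Γ => f ⟨x.1 + 1, hmem2 x.1 x.2⟩) ⁻¹' {v}) :=
      (measurable_pi_apply _) (measurableSet_singleton v)
    exact m1.inter m2
  have key := (hindep.indepFun_finset A B hAB hmeas).comp hgmeas hhmeas
  have e1 : (g ∘ fun ω (i : A) => X i ω) = pcZ X u v p a := rfl
  have e2 : (h ∘ fun ω (i : B) => X i ω) = fun ω => ∑ x ∈ s, pcZ X u v p x ω := by
    funext ω
    show ∑ x ∈ s.attach, _ = _
    exact Finset.sum_attach s fun x => pcZ X u v p x ω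
  rwa [e1, e2] at key

lemma pcZ_mgf_sum [IsProbabilityMeasure (ℙ : Measure Ω)] {X : ℕ → Ω → Γ}
    (hmeas : ∀ x, Measurable (X x))
    (hindep : iIndepFun X) (u v : Γ) (p : ℝ) (r : ℕ) (t : ℝ) :
    ∀ s : Finset ℕ, (∀ x ∈ s, x % 2 = r) →
      mgf (fun ω => ∑ x ∈ s, pcZ X u v p x ω) ℙ t = ∏ x ∈ s, mgf (pcZ X u v p x) ℙ t := by
  intro s
  induction s using Finset.induction_on with
  | empty =>
      intro _
      simp only [Finset.sum_empty, Finset.prod_empty]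
      have : (fun _ : Ω => (0 : ℝ)) = (fun _ => (0 : ℝ)) := rfl
      rw [show (fun _ : Ω => (0 : ℝ)) = (0 : Ω → ℝ) from rfl, mgf_zero_fun]
      simp
  | @insert a s ha ih =>
      intro hall
      have har : a % 2 = r := hall a (Finset.mem_insert_self a s)
      have hs' : ∀ x ∈ s, x % 2 = r := fun x hx => hall x (Finset.mem_insert_of_mem hx)
      simp only [Finset.sum_insert ha, Finset.prod_insert ha]
      rw [show (fun ω => pcZ X u v p a ω + ∑ x ∈ s, pcZ X u v p x ω)
          = (pcZ X u v p a + fun ω => ∑ x ∈ s, pcZ X u v p x ω) from rfl]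
      rw [IndepFun.mgf_add' (pcZ_indep_sum hmeas hindep u v p har hs' ha)
        (pcZ_meas hmeas u v p a).aestronglyMeasurable
        (Finset.measurable_sum s fun x _ => pcZ_meas hmeas u v p x).aestronglyMeasurable]
      rw [ih hs']

lemma pcZ_mgf_le [IsProbabilityMeasure (ℙ : Measure Ω)] {X : ℕ → Ω → Γ}
    (hmeas : ∀ x, Measurable (X x)) (u v : Γ) {p : ℝ} (hp0 : 0 < p) (hp1 : p < 1) (x : ℕ)
    (hA : ℙ {ω | X x ω = u ∧ X (x + 1) ω = v} = ENNReal.ofReal p)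
    {t : ℝ} (ht : |t| ≤ 1) :
    mgf (pcZ X u v p x) ℙ t ≤ Real.exp (t ^ 2) := by
  set A : Set Ω := {ω | X x ω = u ∧ X (x + 1) ω = v} with hAdef
  have hAmeas : MeasurableSet A :=
    (((hmeas x) (measurableSet_singleton u)).inter ((hmeas (x + 1)) (measurableSet_singleton v)))
  have hrep : (fun ω => Real.exp (t * pcZ X u v p x ω)) =
      fun ω => A.indicator (fun _ => Real.exp (t * (1 - p)) - Real.exp (t * (0 - p))) ω
        + Real.exp (t * (0 - p)) := by
    funext ω
    by_cases h : X x ω = u ∧ X (x + 1) ω = v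
    · have hm : ω ∈ A := h
      rw [Set.indicator_of_mem hm]
      simp only [pcZ, if_pos h]
      ring
    · have hm : ω ∉ A := h
      rw [Set.indicator_of_notMem hm]
      simp only [pcZ, if_neg h]
      ring
  have hmgf : mgf (pcZ X u v p x) ℙ t
      = (Real.exp (t * (1 - p)) - Real.exp (t * (0 - p))) * p + Real.exp (t * (0 - p)) := by
    rw [mgf]
    rw [show (fun ω => Real.exp (t * pcZ X u v p x ω)) = _ from hrep]
    rw [integral_add ((integrable_const _).indicator hAmeas) (integrable_const _)]
    rw [integral_indicator_const _ hAmeas, integral_const]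
    have : (ℙ : Measure Ω).real A = p := by
      rw [measureReal_def, hA, ENNReal.toReal_ofReal hp0.le]
    rw [this]
    simp [smul_eq_mul, mul_comm]
  rw [hmgf]
  have h1 : (Real.exp (t * (1 - p)) - Real.exp (t * (0 - p))) * p + Real.exp (t * (0 - p))
      = Real.exp (-(t * p)) * (1 - p + p * Real.exp t) := by
    rw [show t * (1 - p) = t + -(t * p) by ring, show t * (0 - p) = -(t * p) by ring,
      Real.exp_add]
    ring
  rw [h1]
  have h2 : 1 - p + p * Real.exp t ≤ Real.exp (p * (Real.exp t - 1)) := by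
    have := Real.add_one_le_exp (p * (Real.exp t - 1))
    linarith
  have h3 : Real.exp (-(t * p)) * (1 - p + p * Real.exp t)
      ≤ Real.exp (-(t * p)) * Real.exp (p * (Real.exp t - 1)) := by
    apply mul_le_mul_of_nonneg_left h2 (Real.exp_pos _).le
  refine h3.trans ?_
  rw [← Real.exp_add]
  apply Real.exp_le_exp.mpr
  have hq0 : 0 ≤ Real.exp t - 1 - t := by
    have := Real.add_one_le_exp t; linarith
  have hq : Real.exp t - 1 - t ≤ t ^ 2 := pcExpAux ht
  have : -(t * p) + p * (Real.exp t - 1) = p * (Real.exp t - 1 - t) := by ring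
  rw [this]
  calc p * (Real.exp t - 1 - t) ≤ 1 * (Real.exp t - 1 - t) :=
        mul_le_mul_of_nonneg_right hp1.le hq0
    _ ≤ t ^ 2 := by linarith

end Aux
theorem pair_count_large_deviations
    {Γ : Type*} [Fintype Γ] [Nonempty Γ] [DecidableEq Γ]
    [MeasurableSpace Γ] [MeasurableSingletonClass Γ]
    (ρ : Γ → ℝ) (hρ : ∀ w, 0 < ρ w ∧ ρ w < 1) (hsum : ∑ w, ρ w = 1)
    {Ω : Type*} [MeasureSpace Ω] [IsProbabilityMeasure (ℙ : Measure Ω)]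
    (X : ℕ → Ω → Γ) (hmeas : ∀ x, Measurable (X x))
    (hindep : iIndepFun X)
    (hdist : ∀ (x : ℕ) (u : Γ), ℙ (X x ⁻¹' {u}) = ENNReal.ofReal (ρ u)) :
    ∃ C c ε₀ : ℝ, 0 < c ∧ 0 < ε₀ ∧
      ∀ ε : ℝ, 0 < ε → ε < ε₀ → ∀ N : ℕ, 1 ≤ N → ∀ u v : Γ, u ≠ v →
        ℙ {ω | ((((Finset.range N).filter
                (fun x => X x ω = u ∧ X (x + 1) ω = v)).card : ℝ)
                - (N : ℝ) * (ρ u * ρ v)) ∉ Set.Ioo (-(ε * N)) (ε * N)}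
          ≤ ENNReal.ofReal (C * Real.exp (-c * N * ε ^ 2)) := by
  classical
  refine ⟨4, 1/16, 1, by norm_num, by norm_num, ?_⟩
  intro ε hε hε1 N hN u v huv
  set p : ℝ := ρ u * ρ v with hpdef
  have hp0 : 0 < p := mul_pos (hρ u).1 (hρ v).1
  have hp1 : p < 1 := by nlinarith [(hρ u).1, (hρ u).2, (hρ v).1, (hρ v).2]
  -- probability of the pair event
  have hA : ∀ x : ℕ, ℙ {ω | X x ω = u ∧ X (x + 1) ω = v} = ENNReal.ofReal p := by
    intro x
    have hi : IndepFun (X x) (X (x + 1)) ℙ := hindep.indepFun (by omega)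
    have hmul := hi.measure_inter_preimage_eq_mul {u} {v}
      (measurableSet_singleton u) (measurableSet_singleton v)
    have hset : {ω | X x ω = u ∧ X (x + 1) ω = v}
        = X x ⁻¹' {u} ∩ X (x + 1) ⁻¹' {v} := rfl
    rw [hset, hmul, hdist, hdist, ← ENNReal.ofReal_mul (hρ u).1.le]
  set Z := pcZ X u v p with hZ
  -- rewrite the deviation as sum of centered indicators
  have hcard : ∀ ω, (((Finset.range N).filter
        (fun x => X x ω = u ∧ X (x + 1) ω = v)).card : ℝ) - (N : ℝ) * p
      = ∑ x ∈ Finset.range N, Z x ω := by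
    intro ω
    have h1 : ∑ x ∈ Finset.range N, Z x ω
        = (∑ x ∈ Finset.range N, (if X x ω = u ∧ X (x + 1) ω = v then (1 : ℝ) else 0))
          - (N : ℝ) * p := by
      rw [hZ]
      simp only [pcZ]
      rw [Finset.sum_sub_distrib, Finset.sum_const, Finset.card_range, nsmul_eq_mul]
    rw [h1, Finset.sum_boole]
  set s0 : Finset ℕ := (Finset.range N).filter (fun x => x % 2 = 0) with hs0
  set s1 : Finset ℕ := (Finset.range N).filter (fun x => ¬ x % 2 = 0) with hs1
  set S0 : Ω → ℝ := fun ω => ∑ x ∈ s0, Z x ω with hS0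
  set S1 : Ω → ℝ := fun ω => ∑ x ∈ s1, Z x ω with hS1
  have hsplit : ∀ ω, ∑ x ∈ Finset.range N, Z x ω = S0 ω + S1 ω := by
    intro ω
    rw [hS0, hS1, hs0, hs1]
    exact (Finset.sum_filter_add_sum_filter_not (Finset.range N) (fun x => x % 2 = 0) _).symm
  -- event inclusion
  have hsub : {ω | ((((Finset.range N).filter
        (fun x => X x ω = u ∧ X (x + 1) ω = v)).card : ℝ)
        - (N : ℝ) * (ρ u * ρ v)) ∉ Set.Ioo (-(ε * N)) (ε * N)}
      ⊆ ({ω | ε * N / 2 ≤ S0 ω} ∪ {ω | S0 ω ≤ -(ε * N / 2)})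
        ∪ ({ω | ε * N / 2 ≤ S1 ω} ∪ {ω | S1 ω ≤ -(ε * N / 2)}) := by
    intro ω hω
    simp only [Set.mem_setOf_eq, Set.mem_Ioo, not_and_or, not_lt] at hω
    rw [← hpdef, hcard ω, hsplit ω] at hω
    simp only [Set.mem_union, Set.mem_setOf_eq]
    rcases hω with h | h
    · by_cases h0 : S0 ω ≤ -(ε * N / 2)
      · exact Or.inl (Or.inr h0)
      · exact Or.inr (Or.inr (by push_neg at h0; linarith))
    · by_cases h0 : ε * N / 2 ≤ S0 ω
      · exact Or.inl (Or.inl h0)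
      · exact Or.inr (Or.inl (by push_neg at h0; linarith))
  -- tail bounds
  have hb : (0 : ℝ) < Real.exp (-(1/16) * N * ε ^ 2) := Real.exp_pos _
  have tail : ∀ s : Finset ℕ, ∀ r : ℕ, s ⊆ Finset.range N → (∀ x ∈ s, x % 2 = r) →
      ℙ {ω | ε * N / 2 ≤ ∑ x ∈ s, Z x ω} ≤ ENNReal.ofReal (Real.exp (-(1/16) * N * ε ^ 2)) ∧
      ℙ {ω | (∑ x ∈ s, Z x ω) ≤ -(ε * N / 2)}
        ≤ ENNReal.ofReal (Real.exp (-(1/16) * N * ε ^ 2)) := by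
    intro s r hsub' hpar
    have hcardle : (s.card : ℝ) ≤ N := by
      have := Finset.card_le_card hsub'
      rw [Finset.card_range] at this
      exact_mod_cast this
    have hmgf : ∀ t : ℝ, |t| ≤ 1 →
        mgf (fun ω => ∑ x ∈ s, Z x ω) ℙ t ≤ Real.exp (N * t ^ 2) := by
      intro t ht
      rw [hZ, pcZ_mgf_sum hmeas hindep u v p r t s hpar]
      calc ∏ x ∈ s, mgf (pcZ X u v p x) ℙ t ≤ ∏ x ∈ s, Real.exp (t ^ 2) :=
            Finset.prod_le_prod (fun x _ => mgf_nonneg)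
              (fun x _ => pcZ_mgf_le hmeas u v hp0 hp1 x (hA x) ht)
        _ = Real.exp (s.card * t ^ 2) := by
            rw [Finset.prod_const, ← Real.exp_nat_mul]
        _ ≤ Real.exp ((N : ℝ) * t ^ 2) := by
            apply Real.exp_le_exp.mpr
            exact mul_le_mul_of_nonneg_right hcardle (sq_nonneg t)
    have ht4 : |ε / 4| ≤ 1 := by rw [abs_of_pos (by linarith)]; linarith
    have ht4' : |-(ε / 4)| ≤ 1 := by rw [abs_neg]; exact ht4
    have hexp : Real.exp (-(ε / 4) * (ε * N / 2)) * Real.exp ((N : ℝ) * (ε / 4) ^ 2)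
        = Real.exp (-(1/16) * N * ε ^ 2) := by
      rw [← Real.exp_add]
      congr 1
      ring
    constructor
    · have hch := measure_ge_le_exp_mul_mgf (X := fun ω => ∑ x ∈ s, Z x ω) (ε * N / 2)
        (by positivity : (0:ℝ) ≤ ε / 4) (by rw [hZ]; exact pcZ_int hmeas u v hp0.le hp1.le s _)
      have h2 : (ℙ {ω | ε * N / 2 ≤ ∑ x ∈ s, Z x ω}).toReal
          ≤ Real.exp (-(1/16) * N * ε ^ 2) := by
        refine hch.trans ?_
        rw [← hexp]
        exact mul_le_mul_of_nonneg_left (hmgf _ ht4) (Real.exp_pos _).le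
      calc ℙ {ω | ε * N / 2 ≤ ∑ x ∈ s, Z x ω}
          = ENNReal.ofReal (ℙ {ω | ε * N / 2 ≤ ∑ x ∈ s, Z x ω}).toReal :=
            (ENNReal.ofReal_toReal (measure_ne_top _ _)).symm
        _ ≤ _ := ENNReal.ofReal_le_ofReal h2
    · have hch := measure_le_le_exp_mul_mgf (X := fun ω => ∑ x ∈ s, Z x ω) (-(ε * N / 2))
        (by linarith : -(ε / 4) ≤ 0) (by rw [hZ]; exact pcZ_int hmeas u v hp0.le hp1.le s _)
      have h2 : (ℙ {ω | (∑ x ∈ s, Z x ω) ≤ -(ε * N / 2)}).toReal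
          ≤ Real.exp (-(1/16) * N * ε ^ 2) := by
        refine hch.trans ?_
        have : Real.exp (-(-(ε / 4)) * -(ε * N / 2)) = Real.exp (-(ε / 4) * (ε * N / 2)) := by
          congr 1; ring
        rw [this, ← hexp]
        apply mul_le_mul_of_nonneg_left _ (Real.exp_pos _).le
        have := hmgf (-(ε / 4)) ht4'
        calc mgf (fun ω => ∑ x ∈ s, Z x ω) ℙ (-(ε / 4))
            ≤ Real.exp ((N : ℝ) * (-(ε / 4)) ^ 2) := this
          _ = Real.exp ((N : ℝ) * (ε / 4) ^ 2) := by congr 1; ring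
      calc ℙ {ω | (∑ x ∈ s, Z x ω) ≤ -(ε * N / 2)}
          = ENNReal.ofReal (ℙ {ω | (∑ x ∈ s, Z x ω) ≤ -(ε * N / 2)}).toReal :=
            (ENNReal.ofReal_toReal (measure_ne_top _ _)).symm
        _ ≤ _ := ENNReal.ofReal_le_ofReal h2
  have t0 := tail s0 0 (Finset.filter_subset _ _) (fun x hx => (Finset.mem_filter.mp hx).2)
  have t1 := tail s1 1 (Finset.filter_subset _ _)
    (fun x hx => by have := (Finset.mem_filter.mp hx).2; omega)
  calc ℙ {ω | ((((Finset.range N).filter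
        (fun x => X x ω = u ∧ X (x + 1) ω = v)).card : ℝ)
        - (N : ℝ) * (ρ u * ρ v)) ∉ Set.Ioo (-(ε * N)) (ε * N)}
      ≤ ℙ (({ω | ε * N / 2 ≤ S0 ω} ∪ {ω | S0 ω ≤ -(ε * N / 2)})
        ∪ ({ω | ε * N / 2 ≤ S1 ω} ∪ {ω | S1 ω ≤ -(ε * N / 2)})) := measure_mono hsub
    _ ≤ ℙ ({ω | ε * N / 2 ≤ S0 ω} ∪ {ω | S0 ω ≤ -(ε * N / 2)})
        + ℙ ({ω | ε * N / 2 ≤ S1 ω} ∪ {ω | S1 ω ≤ -(ε * N / 2)}) := measure_union_le _ _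
    _ ≤ (ℙ {ω | ε * N / 2 ≤ S0 ω} + ℙ {ω | S0 ω ≤ -(ε * N / 2)})
        + (ℙ {ω | ε * N / 2 ≤ S1 ω} + ℙ {ω | S1 ω ≤ -(ε * N / 2)}) :=
        add_le_add (measure_union_le _ _) (measure_union_le _ _)
    _ ≤ (ENNReal.ofReal (Real.exp (-(1/16) * N * ε ^ 2))
          + ENNReal.ofReal (Real.exp (-(1/16) * N * ε ^ 2)))
        + (ENNReal.ofReal (Real.exp (-(1/16) * N * ε ^ 2))
          + ENNReal.ofReal (Real.exp (-(1/16) * N * ε ^ 2))) :=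
        add_le_add (add_le_add t0.1 t0.2) (add_le_add t1.1 t1.2)
    _ = 4 * ENNReal.ofReal (Real.exp (-(1/16) * N * ε ^ 2)) := by ring
    _ = ENNReal.ofReal (4 * Real.exp (-(1/16) * (N : ℝ) * ε ^ 2)) := by
        rw [ENNReal.ofReal_mul (by norm_num : (0:ℝ) ≤ 4)]
        norm_num
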